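/- Linearly-extendible families are ideal families: Let F be a field and 𝓛 = (L_0,…,L_{s−1}) a linearly-extendible bivariate family of linear operators. Then for every point (x,y) ∈ F×F, the set I^{(x,y)}(𝓛) = {p ∈ F[X,Y] : L_i(p)(x,y) = 0 for all i ∈ {0,…,s−1}} is an ideal of the ring F[X,Y]. -/
import Mathlib


open MvPolynomial

noncomputable section

/-- A bivariate family of linear operators is linearly-extendible, witnessed by
matrices `Mx`, `My` over `F[X,Y]`. -/
def LinExt (F : Type) [Field F] (s : ℕ)
    (L : Fin s → MvPolynomial (Fin 2) F →ₗ[F] MvPolynomial (Fin 2) F)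
    (Mx My : Matrix (Fin s) (Fin s) (MvPolynomial (Fin 2) F)) : Prop :=
  (∀ p, (fun i => L i (X 0 * p)) = Mx.mulVec fun i => L i p) ∧
  (∀ p, (fun i => L i (X 1 * p)) = My.mulVec fun i => L i p)

/-- Linearly-extendible families are ideal families: for every point `(x,y)`, the
set `I^{(x,y)}(𝓛) = {p : ∀ i, L_i(p)(x,y) = 0}` is an ideal of `F[X,Y]`. -/
theorem linearly_extendible_is_ideal_family
    {F : Type} [Field F] {s : ℕ}
    (L : Fin s → MvPolynomial (Fin 2) F →ₗ[F] MvPolynomial (Fin 2) F)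
    (Mx My : Matrix (Fin s) (Fin s) (MvPolynomial (Fin 2) F))
    (hext : LinExt F s L Mx My) :
    ∀ x y : F, ∃ I : Ideal (MvPolynomial (Fin 2) F),
      ∀ p : MvPolynomial (Fin 2) F,
        p ∈ I ↔ ∀ i : Fin s, eval ![x, y] (L i p) = 0 := by
  intro x y
  set S : Set (MvPolynomial (Fin 2) F) :=
    {p | ∀ i : Fin s, eval ![x, y] (L i p) = 0} with hS
  have hzero : (0 : MvPolynomial (Fin 2) F) ∈ S := by
    intro i; simp
  have hadd : ∀ p q, p ∈ S → q ∈ S → p + q ∈ S := by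
    intro p q hp hq i
    simp [map_add, hp i, hq i]
  have hXmul : ∀ (n : Fin 2) p, p ∈ S → X n * p ∈ S := by
    intro n p hp i
    have hn : n = 0 ∨ n = 1 := by omega
    rcases hn with rfl | rfl
    · have h := congrFun (hext.1 p) i
      rw [h, Matrix.mulVec]
      simp only [dotProduct, map_sum, map_mul]
      exact Finset.sum_eq_zero fun j _ => by rw [hp j, mul_zero]
    · have h := congrFun (hext.2 p) i
      rw [h, Matrix.mulVec]
      simp only [dotProduct, map_sum, map_mul]
      exact Finset.sum_eq_zero fun j _ => by rw [hp j, mul_zero]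
  have hsmulF : ∀ (a : F) p, p ∈ S → C a * p ∈ S := by
    intro a p hp i
    have : C (σ := Fin 2) a * p = a • p := by
      rw [smul_eq_C_mul]
    rw [this, map_smul]
    simp [hp i]
  have hmul : ∀ (r p : MvPolynomial (Fin 2) F), p ∈ S → r * p ∈ S := by
    intro r
    induction r using MvPolynomial.induction_on with
    | C a => exact fun p hp => hsmulF a p hp
    | add q r hq hr =>
      intro p hp
      have : (q + r) * p = q * p + r * p := by ring
      rw [this]
      exact hadd _ _ (hq p hp) (hr p hp)
    | mul_X q n hq =>
      intro p hp
      have : (q * X n) * p = q * (X n * p) := by ring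
      rw [this]
      exact hq _ (hXmul n p hp)
  refine ⟨{  carrier := S
             zero_mem' := hzero
             add_mem' := fun hp hq => hadd _ _ hp hq
             smul_mem' := fun r p hp => hmul r p hp }, fun p => Iff.rfl⟩
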